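/- Let K be a number field with ring of integers O_K, 𝔫 a nonzero ideal, and 𝔪 an ideal dividing 𝔫. Define φ_k(𝔫, 𝔪) as the number of k-tuples (a₁,…,a_k) of units of O_K/𝔫 whose sum is a unit modulo 𝔪. Then φ_k(𝔫, 𝔪) = φ(𝔫)^k · ∏_{𝔭 | 𝔪} (1 − 1/(N(𝔭)−1) + ⋯ + (−1)^{k−1}/(N(𝔭)−1)^{k−1}), where the product runs over prime ideals dividing 𝔪. -/

import Mathlib

open NumberField

set_option synthInstance.maxHeartbeats 1000000
set_option maxHeartbeats 1000000

section Aux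

open Finset

lemma nat_card_subtype_comp {G H : Type*} [Group G] [Group H] [Finite G]
    (f : G →* H) (hf : Function.Surjective f) (P : H → Prop) :
    Nat.card {g : G // P (f g)} = Nat.card f.ker * Nat.card {h : H // P h} := by
  have : Finite H := Finite.of_surjective f hf
  have e : {g : G // P (f g)} ≃ Σ h : {h : H // P h}, (f ⁻¹' {(h : H)}) :=
    { toFun := fun g => ⟨⟨f g.1, g.2⟩, ⟨g.1, rfl⟩⟩
      invFun := fun x => ⟨x.2.1, by
        have hx : f x.2.1 = (x.1 : H) := x.2.2
        rw [hx]; exact x.1.2⟩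
      left_inv := fun g => rfl
      right_inv := by
        rintro ⟨⟨h, Ph⟩, ⟨g, hg⟩⟩
        have hg' : f g = h := hg
        subst hg'
        rfl }
  have e2 : (Σ h : {h : H // P h}, (f ⁻¹' {(h : H)})) ≃ {h : H // P h} × f.ker :=
    (Equiv.sigmaCongrRight fun h : {h : H // P h} =>
      MonoidHom.fiberEquivKerOfSurjective hf (h : H)).trans (Equiv.sigmaEquivProd _ _)
  rw [Nat.card_congr (e.trans e2), Nat.card_prod, mul_comm]

lemma nat_card_units_domain (F : Type*) [CommRing F] [IsDomain F] [Finite F] :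
    (Nat.card Fˣ : ℚ) = (Nat.card F : ℚ) - 1 := by
  classical
  letI : Fintype F := Fintype.ofFinite F
  have hF : IsField F := Finite.isField_of_domain F
  have hunit : ∀ x : F, x ≠ 0 → IsUnit x := fun x hx =>
    let ⟨y, hy⟩ := hF.mul_inv_cancel hx
    IsUnit.of_mul_eq_one y hy
  have eu : Fˣ ≃ {x : F // ¬ x = 0} :=
    { toFun := fun u => ⟨u, u.ne_zero⟩
      invFun := fun x => (hunit x.1 x.2).unit
      left_inv := fun u => Units.ext ((hunit _ u.ne_zero).unit_spec)
      right_inv := fun x => Subtype.ext ((hunit x.1 x.2).unit_spec) }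
  rw [Nat.card_congr eu, Nat.card_eq_fintype_card, Nat.card_eq_fintype_card,
    Fintype.card_subtype_compl (p := fun x : F => x = 0), Fintype.card_subtype_eq (0 : F)]
  have h1 : 1 ≤ Fintype.card F := Fintype.card_pos
  push_cast [Nat.cast_sub h1]
  ring

lemma card_units_tuple_sum_ne_zero (F : Type*) [CommRing F] [IsDomain F] [Finite F] (k : ℕ) :
    (Nat.card {w : Fin k → Fˣ // ∑ i, (w i : F) ≠ 0} : ℚ) =
      ((Nat.card F : ℚ) - 1) ^ k *
        ∑ j ∈ Finset.range k, (-1 : ℚ) ^ j / ((Nat.card F : ℚ) - 1) ^ j := by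
  classical
  letI : Fintype F := Fintype.ofFinite F
  have hF : IsField F := Finite.isField_of_domain F
  have hunit : ∀ x : F, x ≠ 0 → IsUnit x := fun x hx =>
    let ⟨y, hy⟩ := hF.mul_inv_cancel hx
    IsUnit.of_mul_eq_one y hy
  have eu : Fˣ ≃ {x : F // ¬ x = 0} :=
    { toFun := fun u => ⟨u, u.ne_zero⟩
      invFun := fun x => (hunit x.1 x.2).unit
      left_inv := fun u => Units.ext ((hunit _ u.ne_zero).unit_spec)
      right_inv := fun x => Subtype.ext ((hunit x.1 x.2).unit_spec) }
  have hcu : (Nat.card Fˣ : ℚ) = (Nat.card F : ℚ) - 1 := nat_card_units_domain F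
  have hq1 : 1 < Nat.card F := by
    rw [Nat.card_eq_fintype_card]; exact Fintype.one_lt_card
  have hq : (Nat.card F : ℚ) - 1 ≠ 0 := by
    have : (1 : ℚ) < Nat.card F := by exact_mod_cast hq1
    linarith
  induction k with
  | zero =>
    have : IsEmpty {w : Fin 0 → Fˣ // ∑ i, (w i : F) ≠ 0} :=
      ⟨fun w => w.2 (by simp)⟩
    simp
  | succ k ih =>
    have e1 : {w : Fin (k+1) → Fˣ // ∑ i, (w i : F) ≠ 0} ≃
        {p : Fˣ × (Fin k → Fˣ) // ¬ ((p.1 : F) + ∑ i, (p.2 i : F) = 0)} := by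
      refine Equiv.subtypeEquiv (Fin.consEquiv fun _ : Fin (k+1) => Fˣ).symm fun w => ?_
      rw [not_iff_not, Fin.sum_univ_succ]
      exact Iff.rfl
    have e2 : {p : Fˣ × (Fin k → Fˣ) // (p.1 : F) + ∑ i, (p.2 i : F) = 0} ≃
        {w : Fin k → Fˣ // ∑ i, (w i : F) ≠ 0} :=
      { toFun := fun p => ⟨p.1.2, fun h => by
          have hp := p.2
          rw [h, add_zero] at hp
          exact Units.ne_zero _ hp⟩
        invFun := fun w =>
          ⟨((hunit (-∑ i, (w.1 i : F)) (neg_ne_zero.mpr w.2)).unit, w.1), by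
            simp [IsUnit.unit_spec]⟩
        left_inv := fun p => by
          refine Subtype.ext (Prod.ext (Units.ext ?_) rfl)
          have hp := p.2
          rw [IsUnit.unit_spec]
          exact neg_eq_of_add_eq_zero_left hp
        right_inv := fun w => rfl }
    have hcompl :
        Fintype.card {p : Fˣ × (Fin k → Fˣ) // ¬ ((p.1 : F) + ∑ i, (p.2 i : F) = 0)} =
          Fintype.card (Fˣ × (Fin k → Fˣ)) -
            Fintype.card {p : Fˣ × (Fin k → Fˣ) // (p.1 : F) + ∑ i, (p.2 i : F) = 0} :=
      Fintype.card_subtype_compl _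
    have hfk : Nat.card (Fin k) = k := by simp
    have hfull : (Fintype.card (Fˣ × (Fin k → Fˣ)) : ℚ) = ((Nat.card F : ℚ) - 1) ^ (k + 1) := by
      rw [← Nat.card_eq_fintype_card, Nat.card_prod, Nat.card_fun, hfk]
      push_cast
      rw [hcu]
      ring
    have key : (Nat.card {w : Fin (k+1) → Fˣ // ∑ i, (w i : F) ≠ 0} : ℚ)
        = ((Nat.card F : ℚ) - 1) ^ (k+1)
            - (Nat.card {w : Fin k → Fˣ // ∑ i, (w i : F) ≠ 0} : ℚ) := by
      rw [Nat.card_congr e1, ← Nat.card_congr e2]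
      rw [Nat.card_eq_fintype_card, Nat.card_eq_fintype_card, hcompl,
        Nat.cast_sub (Fintype.card_subtype_le _), hfull]
      simp [Nat.card_eq_fintype_card]
    rw [key, ih]
    rw [Finset.sum_range_succ']
    have hstep : ∀ j ∈ Finset.range k,
        (-1 : ℚ) ^ (j+1) / ((Nat.card F : ℚ) - 1) ^ (j+1)
          = (-1 / ((Nat.card F : ℚ) - 1)) * ((-1 : ℚ) ^ j / ((Nat.card F : ℚ) - 1) ^ j) := by
      intro j _
      rw [pow_succ, pow_succ]
      field_simp
    rw [Finset.sum_congr rfl hstep, ← Finset.mul_sum]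
    set q : ℚ := (Nat.card F : ℚ) with hqdef
    set Sg : ℚ := ∑ j ∈ Finset.range k, (-1 : ℚ) ^ j / (q - 1) ^ j with hSg
    field_simp
    ring

lemma isUnit_quotient_mk_iff {R : Type*} [CommRing R] [IsDedekindDomain R]
    {𝔦 : Ideal R} (y : R) :
    IsUnit (Ideal.Quotient.mk 𝔦 y) ↔ ∀ 𝔭 : Ideal R, 𝔭.IsPrime → 𝔭 ∣ 𝔦 → y ∉ 𝔭 := by
  constructor
  · intro hu 𝔭 hp hdvd hy
    have hle : 𝔦 ≤ 𝔭 := Ideal.le_of_dvd hdvd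
    have h2 := hu.map (Ideal.Quotient.factor hle)
    rw [Ideal.Quotient.factor_mk, Ideal.Quotient.eq_zero_iff_mem.mpr hy] at h2
    haveI := Ideal.Quotient.nontrivial_iff.mpr hp.ne_top
    exact not_isUnit_zero h2
  · intro h
    have htop : Ideal.span {y} ⊔ 𝔦 = ⊤ := by
      by_contra hne
      obtain ⟨M, hM, hle⟩ := Ideal.exists_le_maximal _ hne
      have hMdvd : M ∣ 𝔦 := Ideal.dvd_iff_le.mpr (le_trans le_sup_right hle)
      exact h M hM.isPrime hMdvd
        (hle (le_sup_left (a := Ideal.span {y}) (Ideal.mem_span_singleton_self y)))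
    have h1 : (1 : R) ∈ Ideal.span {y} ⊔ 𝔦 := htop ▸ Submodule.mem_top
    obtain ⟨a, ha, b, hb, hab⟩ := Submodule.mem_sup.mp h1
    obtain ⟨c, hc⟩ := Ideal.mem_span_singleton'.mp ha
    refine IsUnit.of_mul_eq_one (Ideal.Quotient.mk 𝔦 c) ?_
    rw [← map_mul, mul_comm, hc]
    have ha1 : a = 1 - b := by rw [← hab]; ring
    rw [ha1, map_sub, map_one, Ideal.Quotient.eq_zero_iff_mem.mpr hb, sub_zero]

end Aux

/-- `φ_k(𝔫, 𝔪)`: the number of `k`-tuples of units of `𝓞 K ⧸ 𝔫` whose sum maps to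
a unit of `𝓞 K ⧸ 𝔪`. -/
noncomputable def phiPairIdeal (K : Type*) [Field K] [NumberField K]
    (k : ℕ) (𝔫 𝔪 : Ideal (𝓞 K)) : ℕ :=
  Nat.card {v : Fin k → (𝓞 K ⧸ 𝔫)ˣ //
    ∀ y : 𝓞 K, Ideal.Quotient.mk 𝔫 y = ∑ i, (v i : 𝓞 K ⧸ 𝔫) →
      IsUnit (Ideal.Quotient.mk 𝔪 y)}

/-- For `𝔪 ∣ 𝔫`,
`φ_k(𝔫, 𝔪) = φ(𝔫)^k · ∏_{𝔭 ∣ 𝔪} (1 − 1/(N(𝔭)−1) + ⋯ + (−1)^{k−1}/(N(𝔭)−1)^{k−1})`. -/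
theorem phiPairIdeal_formula (K : Type*) [Field K] [NumberField K]
    (k : ℕ) (hk : 1 ≤ k) (𝔫 𝔪 : Ideal (𝓞 K)) (h𝔫 : 𝔫 ≠ ⊥) (h𝔪 : 𝔪 ∣ 𝔫) :
    (phiPairIdeal K k 𝔫 𝔪 : ℚ) =
      (Nat.card ((𝓞 K ⧸ 𝔫)ˣ) : ℚ) ^ k *
        ∏ᶠ (𝔭 : Ideal (𝓞 K)) (_ : 𝔭.IsPrime ∧ 𝔭 ∣ 𝔪),
          ∑ j ∈ Finset.range k, (-1 : ℚ) ^ j / ((Ideal.absNorm 𝔭 : ℚ) - 1) ^ j := by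
  classical
  have hle𝔪 : 𝔫 ≤ 𝔪 := Ideal.le_of_dvd h𝔪
  have h𝔪0 : 𝔪 ≠ ⊥ := fun h => h𝔫 (le_bot_iff.mp (h ▸ hle𝔪))
  -- the finite set of primes dividing 𝔫
  have hSfin : {𝔭 : Ideal (𝓞 K) | 𝔭.IsPrime ∧ 𝔭 ∣ 𝔫}.Finite := by
    have hd : {I : Ideal (𝓞 K) | I ∣ 𝔫}.Finite :=
      Set.finite_coe_iff.mp
        (@Finite.of_fintype _ (UniqueFactorizationMonoid.fintypeSubtypeDvd 𝔫 h𝔫))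
    exact Set.Finite.subset hd fun 𝔭 h => h.2
  set S : Finset (Ideal (𝓞 K)) := hSfin.toFinset with hSdef
  have hmemS : ∀ {𝔭 : Ideal (𝓞 K)}, 𝔭 ∈ S ↔ 𝔭.IsPrime ∧ 𝔭 ∣ 𝔫 := fun {𝔭} => hSfin.mem_toFinset
  have hprime : ∀ 𝔭 : S, (𝔭 : Ideal (𝓞 K)).IsPrime := fun 𝔭 => (hmemS.mp 𝔭.2).1
  have hdvd𝔫 : ∀ 𝔭 : S, (𝔭 : Ideal (𝓞 K)) ∣ 𝔫 := fun 𝔭 => (hmemS.mp 𝔭.2).2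
  have hnebot : ∀ 𝔭 : S, (𝔭 : Ideal (𝓞 K)) ≠ ⊥ := by
    intro 𝔭 h0
    apply h𝔫
    rw [← Ideal.zero_eq_bot] at h0 ⊢
    exact zero_dvd_iff.mp (h0 ▸ hdvd𝔫 𝔭)
  have hmax : ∀ 𝔭 : S, (𝔭 : Ideal (𝓞 K)).IsMaximal :=
    fun 𝔭 => (hprime 𝔭).isMaximal (hnebot 𝔭)
  -- finiteness
  haveI hfin𝔫 : Finite (𝓞 K ⧸ 𝔫) := Ideal.finiteQuotientOfFreeOfNeBot 𝔫 h𝔫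
  haveI hfinq : ∀ 𝔭 : S, Finite (𝓞 K ⧸ (𝔭 : Ideal (𝓞 K))) := fun 𝔭 =>
    Ideal.finiteQuotientOfFreeOfNeBot _ (hnebot 𝔭)
  haveI hdom : ∀ 𝔭 : S, IsDomain (𝓞 K ⧸ (𝔭 : Ideal (𝓞 K))) := fun 𝔭 =>
    have := hprime 𝔭
    Ideal.Quotient.isDomain _
  -- the quotient maps
  set π : ∀ 𝔭 : S, (𝓞 K ⧸ 𝔫) →+* 𝓞 K ⧸ (𝔭 : Ideal (𝓞 K)) :=
    fun 𝔭 => Ideal.Quotient.factor (Ideal.le_of_dvd (hdvd𝔫 𝔭)) with hπdef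
  set u : (𝓞 K ⧸ 𝔫)ˣ →* ∀ 𝔭 : S, (𝓞 K ⧸ (𝔭 : Ideal (𝓞 K)))ˣ :=
    Pi.monoidHom fun 𝔭 => Units.map (π 𝔭) with hudef
  have hcop : Pairwise fun i j : S => IsCoprime (i : Ideal (𝓞 K)) (j : Ideal (𝓞 K)) :=
    fun i j hij => Ideal.isCoprime_iff_sup_eq.mpr
      ((hmax i).coprime_of_ne (hmax j) (fun h => hij (Subtype.ext h)))
  -- surjectivity of u
  have hu_surj : Function.Surjective u := by
    intro w
    obtain ⟨r, hr⟩ := Ideal.pi_quotient_surjective hcop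
      (fun 𝔭 : S => ((w 𝔭 : (𝓞 K ⧸ (𝔭 : Ideal (𝓞 K))))))
    have hunit : IsUnit (Ideal.Quotient.mk 𝔫 r) := by
      rw [isUnit_quotient_mk_iff]
      intro 𝔭 hp hdvd hy
      have h𝔭S : 𝔭 ∈ S := hmemS.mpr ⟨hp, hdvd⟩
      have h0 : (Ideal.Quotient.mk 𝔭 r) = 0 := Ideal.Quotient.eq_zero_iff_mem.mpr hy
      have hr𝔭 := hr ⟨𝔭, h𝔭S⟩
      haveI := hdom ⟨𝔭, h𝔭S⟩
      exact Units.ne_zero (w ⟨𝔭, h𝔭S⟩) (by rw [← hr𝔭]; exact h0)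
    obtain ⟨x, hx⟩ := hunit
    refine ⟨x, funext fun 𝔭 => Units.ext ?_⟩
    show ((π 𝔭) (x : 𝓞 K ⧸ 𝔫)) = (w 𝔭 : 𝓞 K ⧸ (𝔭 : Ideal (𝓞 K)))
    rw [hx, hπdef]
    rw [Ideal.Quotient.factor_mk]
    exact (hr 𝔭)
  -- the tuple-level map
  set c : (Fin k → (𝓞 K ⧸ 𝔫)ˣ) →* (Fin k → ∀ 𝔭 : S, (𝓞 K ⧸ (𝔭 : Ideal (𝓞 K)))ˣ) :=
    u.compLeft (Fin k) with hcdef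
  have hc_surj : Function.Surjective c := fun w =>
    ⟨fun i => (hu_surj (w i)).choose, funext fun i => (hu_surj (w i)).choose_spec⟩
  have hcker : Nat.card c.ker = (Nat.card u.ker) ^ k := by
    have e : c.ker ≃ (Fin k → u.ker) :=
      { toFun := fun v i => ⟨v.1 i, show u (v.1 i) = 1 from congrFun v.2 i⟩
        invFun := fun t => ⟨fun i => (t i).1,
          show c (fun i => (t i).1) = 1 from funext fun i => (t i).2⟩
        left_inv := fun v => Subtype.ext rfl
        right_inv := fun t => rfl }
    rw [Nat.card_congr e, Nat.card_fun]
    simp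
  -- the predicate is equivalent to a componentwise one
  set Q : (Fin k → ∀ 𝔭 : S, (𝓞 K ⧸ (𝔭 : Ideal (𝓞 K)))ˣ) → Prop :=
    fun w => ∀ 𝔭 : S, (𝔭 : Ideal (𝓞 K)) ∣ 𝔪 →
      ∑ i, ((w i 𝔭 : 𝓞 K ⧸ (𝔭 : Ideal (𝓞 K)))) ≠ 0 with hQdef
  have hP : ∀ v : Fin k → (𝓞 K ⧸ 𝔫)ˣ,
      (∀ y : 𝓞 K, Ideal.Quotient.mk 𝔫 y = ∑ i, (v i : 𝓞 K ⧸ 𝔫) →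
        IsUnit (Ideal.Quotient.mk 𝔪 y)) ↔ Q (c v) := by
    intro v
    obtain ⟨y, hy⟩ := Ideal.Quotient.mk_surjective (I := 𝔫) (∑ i, (v i : 𝓞 K ⧸ 𝔫))
    have hyall : ∀ 𝔭 : S, (Ideal.Quotient.mk (𝔭 : Ideal (𝓞 K)) y)
        = ∑ i, ((c v) i 𝔭 : 𝓞 K ⧸ (𝔭 : Ideal (𝓞 K))) := by
      intro 𝔭
      have h2 : (π 𝔭) (Ideal.Quotient.mk 𝔫 y) = Ideal.Quotient.mk _ y :=
        Ideal.Quotient.factor_mk _ _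
      calc Ideal.Quotient.mk (𝔭 : Ideal (𝓞 K)) y
          = (π 𝔭) (Ideal.Quotient.mk 𝔫 y) := h2.symm
        _ = (π 𝔭) (∑ i, (v i : 𝓞 K ⧸ 𝔫)) := by rw [hy]
        _ = ∑ i, (π 𝔭) ((v i : 𝓞 K ⧸ 𝔫)) := map_sum _ _ _
        _ = ∑ i, ((c v) i 𝔭 : 𝓞 K ⧸ (𝔭 : Ideal (𝓞 K))) := rfl
    constructor
    · intro hP0 𝔭 hdvd hzero
      have hu := hP0 y hy
      have hnot := (isUnit_quotient_mk_iff y).mp hu (𝔭 : Ideal (𝓞 K)) (hprime 𝔭) hdvd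
      exact hnot (Ideal.Quotient.eq_zero_iff_mem.mp ((hyall 𝔭).symm ▸ hzero))
    · intro hQv y' hy'
      have h1 : Ideal.Quotient.mk 𝔪 y' = Ideal.Quotient.mk 𝔪 y := by
        have h2 : Ideal.Quotient.mk 𝔫 y' = Ideal.Quotient.mk 𝔫 y := by rw [hy', hy]
        exact Ideal.Quotient.eq.mpr (hle𝔪 (Ideal.Quotient.eq.mp h2))
      rw [h1, isUnit_quotient_mk_iff]
      intro 𝔭 hp hdvd hy𝔭
      have h𝔭S : 𝔭 ∈ S := hmemS.mpr ⟨hp, hdvd.trans h𝔪⟩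
      exact hQv ⟨𝔭, h𝔭S⟩ hdvd
        ((hyall ⟨𝔭, h𝔭S⟩).symm.trans (Ideal.Quotient.eq_zero_iff_mem.mpr hy𝔭))
  -- counting
  have hcount : (phiPairIdeal K k 𝔫 𝔪 : ℕ) =
      Nat.card c.ker * Nat.card {w : Fin k → ∀ 𝔭 : S, (𝓞 K ⧸ (𝔭 : Ideal (𝓞 K)))ˣ // Q w} := by
    rw [phiPairIdeal]
    rw [Nat.card_congr (Equiv.subtypeEquivRight hP)]
    exact nat_card_subtype_comp c hc_surj Q
  have hlocalsplit : Nat.card {w : Fin k → ∀ 𝔭 : S, (𝓞 K ⧸ (𝔭 : Ideal (𝓞 K)))ˣ // Q w}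
      = ∏ 𝔭 : S, Nat.card {t : Fin k → (𝓞 K ⧸ (𝔭 : Ideal (𝓞 K)))ˣ //
          (𝔭 : Ideal (𝓞 K)) ∣ 𝔪 → ∑ i, (t i : 𝓞 K ⧸ (𝔭 : Ideal (𝓞 K))) ≠ 0} := by
    have e0 : {w : Fin k → ∀ 𝔭 : S, (𝓞 K ⧸ (𝔭 : Ideal (𝓞 K)))ˣ // Q w} ≃
        {w' : ∀ 𝔭 : S, Fin k → (𝓞 K ⧸ (𝔭 : Ideal (𝓞 K)))ˣ //
          ∀ 𝔭 : S, (𝔭 : Ideal (𝓞 K)) ∣ 𝔪 →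
            ∑ i, (w' 𝔭 i : 𝓞 K ⧸ (𝔭 : Ideal (𝓞 K))) ≠ 0} :=
      Equiv.subtypeEquiv (Equiv.piComm _) (fun w => Iff.rfl)
    rw [Nat.card_congr (e0.trans (Equiv.subtypePiEquivPi
      (p := fun (𝔭 : S) (t : Fin k → (𝓞 K ⧸ (𝔭 : Ideal (𝓞 K)))ˣ) =>
        (𝔭 : Ideal (𝓞 K)) ∣ 𝔪 → ∑ i, (t i : 𝓞 K ⧸ (𝔭 : Ideal (𝓞 K))) ≠ 0))), Nat.card_pi]
  -- local factors
  have hA : ∀ 𝔭 : S, (Nat.card {t : Fin k → (𝓞 K ⧸ (𝔭 : Ideal (𝓞 K)))ˣ //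
        (𝔭 : Ideal (𝓞 K)) ∣ 𝔪 → ∑ i, (t i : 𝓞 K ⧸ (𝔭 : Ideal (𝓞 K))) ≠ 0} : ℚ)
      = ((Ideal.absNorm (𝔭 : Ideal (𝓞 K)) : ℚ) - 1) ^ k *
        (if (𝔭 : Ideal (𝓞 K)) ∣ 𝔪 then
          ∑ j ∈ Finset.range k, (-1 : ℚ) ^ j / ((Ideal.absNorm (𝔭 : Ideal (𝓞 K)) : ℚ) - 1) ^ j
        else 1) := by
    intro 𝔭
    haveI := hdom 𝔭
    haveI := hfinq 𝔭
    have hnorm : (Ideal.absNorm (𝔭 : Ideal (𝓞 K)) : ℚ)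
        = (Nat.card (𝓞 K ⧸ (𝔭 : Ideal (𝓞 K))) : ℚ) := by
      rw [Ideal.absNorm_apply, Submodule.cardQuot_apply]
    rw [hnorm]
    by_cases h : (𝔭 : Ideal (𝓞 K)) ∣ 𝔪
    · rw [if_pos h]
      have e : {t : Fin k → (𝓞 K ⧸ (𝔭 : Ideal (𝓞 K)))ˣ //
            (𝔭 : Ideal (𝓞 K)) ∣ 𝔪 → ∑ i, (t i : 𝓞 K ⧸ (𝔭 : Ideal (𝓞 K))) ≠ 0}
          ≃ {t : Fin k → (𝓞 K ⧸ (𝔭 : Ideal (𝓞 K)))ˣ //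
            ∑ i, (t i : 𝓞 K ⧸ (𝔭 : Ideal (𝓞 K))) ≠ 0} :=
        Equiv.subtypeEquivRight (fun t => by simp [h])
      rw [Nat.card_congr e]
      exact card_units_tuple_sum_ne_zero _ k
    · rw [if_neg h, mul_one]
      have e : {t : Fin k → (𝓞 K ⧸ (𝔭 : Ideal (𝓞 K)))ˣ //
            (𝔭 : Ideal (𝓞 K)) ∣ 𝔪 → ∑ i, (t i : 𝓞 K ⧸ (𝔭 : Ideal (𝓞 K))) ≠ 0}
          ≃ (Fin k → (𝓞 K ⧸ (𝔭 : Ideal (𝓞 K)))ˣ) :=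
        Equiv.subtypeUnivEquiv (fun t hd => absurd hd h)
      rw [Nat.card_congr e, Nat.card_fun]
      push_cast
      rw [nat_card_units_domain]
      simp
  -- the cardinality of the unit group
  have hφ : (Nat.card ((𝓞 K ⧸ 𝔫)ˣ) : ℚ) = (Nat.card u.ker : ℚ) *
      ∏ 𝔭 : S, ((Ideal.absNorm (𝔭 : Ideal (𝓞 K)) : ℚ) - 1) := by
    have h0 := nat_card_subtype_comp u hu_surj (fun _ => True)
    have h1 : Nat.card {g : (𝓞 K ⧸ 𝔫)ˣ // True} = Nat.card ((𝓞 K ⧸ 𝔫)ˣ) :=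
      Nat.card_congr (Equiv.subtypeUnivEquiv fun _ => trivial)
    have h2 : Nat.card {h : ∀ 𝔭 : S, (𝓞 K ⧸ (𝔭 : Ideal (𝓞 K)))ˣ // True}
        = Nat.card (∀ 𝔭 : S, (𝓞 K ⧸ (𝔭 : Ideal (𝓞 K)))ˣ) :=
      Nat.card_congr (Equiv.subtypeUnivEquiv fun _ => trivial)
    rw [h1, h2, Nat.card_pi] at h0
    rw [h0]
    push_cast
    congr 1
    refine Finset.prod_congr rfl (fun 𝔭 _ => ?_)
    haveI := hdom 𝔭
    haveI := hfinq 𝔭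
    rw [nat_card_units_domain]
    rw [Ideal.absNorm_apply, Submodule.cardQuot_apply]
  -- the finprod is a finite product over the primes dividing 𝔪
  have hfinp : (∏ᶠ (𝔭 : Ideal (𝓞 K)) (_ : 𝔭.IsPrime ∧ 𝔭 ∣ 𝔪),
        ∑ j ∈ Finset.range k, (-1 : ℚ) ^ j / ((Ideal.absNorm 𝔭 : ℚ) - 1) ^ j)
      = ∏ 𝔭 ∈ S.filter (fun 𝔭 => 𝔭 ∣ 𝔪),
        ∑ j ∈ Finset.range k, (-1 : ℚ) ^ j / ((Ideal.absNorm 𝔭 : ℚ) - 1) ^ j := by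
    apply finprod_cond_eq_prod_of_cond_iff
    intro 𝔭 _
    simp only [Finset.mem_filter]
    exact ⟨fun ⟨hp, hd⟩ => ⟨hmemS.mpr ⟨hp, hd.trans h𝔪⟩, hd⟩,
      fun ⟨hS, hd⟩ => ⟨(hmemS.mp hS).1, hd⟩⟩
  -- put everything together
  calc (phiPairIdeal K k 𝔫 𝔪 : ℚ)
      = (Nat.card u.ker : ℚ) ^ k * ∏ 𝔭 : S,
          (Nat.card {t : Fin k → (𝓞 K ⧸ (𝔭 : Ideal (𝓞 K)))ˣ //
            (𝔭 : Ideal (𝓞 K)) ∣ 𝔪 → ∑ i, (t i : 𝓞 K ⧸ (𝔭 : Ideal (𝓞 K))) ≠ 0} : ℚ) := by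
        rw [hcount, hcker, hlocalsplit]
        push_cast
        ring
    _ = (Nat.card u.ker : ℚ) ^ k * ∏ 𝔭 : S,
          (((Ideal.absNorm (𝔭 : Ideal (𝓞 K)) : ℚ) - 1) ^ k *
            (if (𝔭 : Ideal (𝓞 K)) ∣ 𝔪 then
              ∑ j ∈ Finset.range k, (-1 : ℚ) ^ j /
                ((Ideal.absNorm (𝔭 : Ideal (𝓞 K)) : ℚ) - 1) ^ j
            else 1)) := by
        rw [Finset.prod_congr rfl (fun 𝔭 _ => hA 𝔭)]
    _ = ((Nat.card u.ker : ℚ) * ∏ 𝔭 : S, ((Ideal.absNorm (𝔭 : Ideal (𝓞 K)) : ℚ) - 1)) ^ k *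
          ∏ 𝔭 : S, (if (𝔭 : Ideal (𝓞 K)) ∣ 𝔪 then
              ∑ j ∈ Finset.range k, (-1 : ℚ) ^ j /
                ((Ideal.absNorm (𝔭 : Ideal (𝓞 K)) : ℚ) - 1) ^ j
            else 1) := by
        rw [Finset.prod_mul_distrib, mul_pow, Finset.prod_pow]
        ring
    _ = (Nat.card ((𝓞 K ⧸ 𝔫)ˣ) : ℚ) ^ k *
          ∏ᶠ (𝔭 : Ideal (𝓞 K)) (_ : 𝔭.IsPrime ∧ 𝔭 ∣ 𝔪),
            ∑ j ∈ Finset.range k, (-1 : ℚ) ^ j / ((Ideal.absNorm 𝔭 : ℚ) - 1) ^ j := by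
        rw [← hφ, hfinp]
        congr 1
        rw [Finset.prod_filter]
        exact Finset.prod_coe_sort S (fun 𝔭 => if 𝔭 ∣ 𝔪 then
          ∑ j ∈ Finset.range k, (-1 : ℚ) ^ j / ((Ideal.absNorm 𝔭 : ℚ) - 1) ^ j else 1)
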